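/- Let A, B be real numbers with A + B + 1 < 0 and let C be a non-negative integer. Then there exists a constant D₂ > 0, independent of h, such that for every non-negative integer h, ∑_{k=0}^∞ (k+1)^A (h+k+1)^B (log(h+k+2))^C ≤ D₂ · (h+1)^(max(B, A+B+1)) · (log(h+2))^(C+1). -/

import Mathlib

open MeasureTheory

/-- Pochhammer symbol `(x)_k = x(x+1)⋯(x+k-1)`. -/
noncomputable def poch (x : ℂ) (k : ℕ) : ℂ := ∏ i ∈ Finset.range k, (x + (i : ℂ))

/-- Generalized hypergeometric series with upper parameters `α`, lower parameters `β`. -/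
noncomputable def hyp (α β : List ℂ) (z : ℂ) : ℂ :=
  ∑' k : ℕ, ((α.map fun w => poch w k).prod /
    ((β.map fun w => poch w k).prod * (Nat.factorial k : ℂ))) * z ^ k

/-- Nested expression: `nestR [x₁,…,x_m] = 1 - (1 - (⋯(1 - x_m)x_{m-1}⋯))x₁`. -/
def nestR : List ℝ → ℝ
  | [] => 1
  | t :: rest => 1 - nestR rest * t

/-- The Vasilyev-type integral `J_m(a₀,…,a_m; b₁,…,b_m; z)`. -/
noncomputable def Jint (m : ℕ) (a b : ℕ → ℂ) (z : ℂ) : ℂ :=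
  ∫ x in Set.univ.pi fun _ : Fin m => Set.Ioo (0:ℝ) 1,
    (∏ i : Fin m, ((x i : ℂ) ^ (a (i.1+1) - 1) *
        ((1 - x i : ℝ) : ℂ) ^ (b (i.1+1) - a (i.1+1) - 1))) /
      ((1 - ((nestR (List.ofFn x).tail * (List.ofFn x).headI : ℝ) : ℂ) * z) ^ (a 0))

section SumPowerLogBound

open Finset Real

set_option maxHeartbeats 1000000

private lemma rpow_shift_le (t : ℝ) (ht : t ≤ 0) (k : ℕ) :
    ((k:ℝ)+1)^t ≤ (2:ℝ)^(-t) * ((k:ℝ)+2)^t := by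
  have h1 : ((2:ℝ)*((k:ℝ)+1))^t ≤ ((k:ℝ)+2)^t :=
    Real.rpow_le_rpow_of_nonpos (by positivity) (by push_cast; linarith [Nat.cast_nonneg (α := ℝ) k]) ht
  have h2 : ((2:ℝ)*((k:ℝ)+1))^t = (2:ℝ)^t * ((k:ℝ)+1)^t :=
    Real.mul_rpow (by norm_num) (by positivity)
  have h3 : (0:ℝ) < (2:ℝ)^(-t) := Real.rpow_pos_of_pos two_pos _
  have h4 : (2:ℝ)^(-t) * (2:ℝ)^t = 1 := by
    rw [← Real.rpow_add two_pos]; simp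
  calc ((k:ℝ)+1)^t = ((2:ℝ)^(-t) * (2:ℝ)^t) * ((k:ℝ)+1)^t := by rw [h4, one_mul]
    _ = (2:ℝ)^(-t) * ((2:ℝ)*((k:ℝ)+1))^t := by rw [h2]; ring
    _ ≤ (2:ℝ)^(-t) * ((k:ℝ)+2)^t := by
        exact mul_le_mul_of_nonneg_left h1 h3.le

private lemma sum_rpow_tail (t : ℝ) (ht : t < -1) (m N : ℕ) :
    ∑ k ∈ Finset.Ico m N, ((k:ℝ)+1)^t ≤ ((2:ℝ)^(-t) / (-(t+1))) * ((m:ℝ)+1)^(t+1) := by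
  have hden : (0:ℝ) < -(t+1) := by linarith
  have h2t : (0:ℝ) < (2:ℝ)^(-t) := Real.rpow_pos_of_pos two_pos _
  rcases le_or_gt N m with hNm | hmN
  · rw [Finset.Ico_eq_empty (by omega), Finset.sum_empty]
    positivity
  have hint : ∫ x in (m:ℝ)..(N:ℝ), ((x:ℝ)+1)^t ≤ ((m:ℝ)+1)^(t+1) / (-(t+1)) := by
    have : (∫ x in (m:ℝ)..(N:ℝ), ((x:ℝ)+1)^t) = ∫ x in ((m:ℝ)+1)..((N:ℝ)+1), x^t := by
      simpa using intervalIntegral.integral_comp_add_right (a := (m:ℝ)) (b := (N:ℝ))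
        (fun x => x^t) 1
    rw [this, integral_rpow (Or.inr ⟨by intro h; rw [h] at ht; linarith, by
      rw [Set.mem_uIcc]; push_neg
      constructor <;> intro h <;> [skip; skip] <;>
        nlinarith [Nat.cast_nonneg (α := ℝ) m, Nat.cast_nonneg (α := ℝ) N]⟩)]
    have hNpos : (0:ℝ) < ((N:ℝ)+1)^(t+1) := Real.rpow_pos_of_pos (by positivity) _
    have heq : (((N:ℝ)+1)^(t+1) - ((m:ℝ)+1)^(t+1)) / (t+1)
        = (((m:ℝ)+1)^(t+1) - ((N:ℝ)+1)^(t+1)) / (-(t+1)) := by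
      rw [div_eq_div_iff (by linarith) (by linarith)]; ring
    rw [heq, div_le_div_iff_of_pos_right hden]
    linarith
  have hmono : AntitoneOn (fun x : ℝ => (x+1)^t) (Set.Icc (m:ℝ) (N:ℝ)) := by
    intro x hx y hy hxy
    exact Real.rpow_le_rpow_of_nonpos (by nlinarith [hx.1, Nat.cast_nonneg (α := ℝ) m])
      (by linarith) (by linarith)
  have hsum := AntitoneOn.sum_le_integral_Ico (f := fun x : ℝ => (x+1)^t) hmN.le hmono
  calc ∑ k ∈ Finset.Ico m N, ((k:ℝ)+1)^t
      ≤ ∑ k ∈ Finset.Ico m N, (2:ℝ)^(-t) * ((k:ℝ)+2)^t :=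
        Finset.sum_le_sum fun k _ => rpow_shift_le t (by linarith) k
    _ = (2:ℝ)^(-t) * ∑ k ∈ Finset.Ico m N, (((k:ℝ)+1)+1)^t := by
        rw [Finset.mul_sum]; congr 1; ext k; ring_nf
    _ ≤ (2:ℝ)^(-t) * (((m:ℝ)+1)^(t+1) / (-(t+1))) := by
        refine mul_le_mul_of_nonneg_left ?_ h2t.le
        refine le_trans ?_ hint
        refine le_trans (le_of_eq ?_) hsum
        congr 1; ext k; push_cast; ring_nf
    _ = ((2:ℝ)^(-t) / (-(t+1))) * ((m:ℝ)+1)^(t+1) := by ring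

private lemma head_sum_bound (A : ℝ) : ∃ c : ℝ, 0 < c ∧ ∀ h : ℕ,
    ∑ k ∈ Finset.range (h+1), ((k:ℝ)+1)^A
      ≤ c * ((h:ℝ)+1)^(max 0 (A+1)) * Real.log ((h:ℝ)+2) := by
  have hlog2 : (0:ℝ) < Real.log 2 := Real.log_pos (by norm_num)
  rcases le_or_gt A (-1) with hA | hA
  · -- A ≤ -1 : harmonic-type bound
    refine ⟨2, by norm_num, fun h => ?_⟩
    have hh0 : (0:ℝ) ≤ (h:ℝ) := Nat.cast_nonneg h
    have hlogpos : (0:ℝ) < Real.log ((h:ℝ)+2) := Real.log_pos (by linarith)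
    have hint : ∫ x in ((0:ℕ):ℝ)..((h+1:ℕ):ℝ), (x+1)⁻¹ = Real.log ((h:ℝ)+2) := by
      have heq : (∫ x in ((0:ℕ):ℝ)..((h+1:ℕ):ℝ), (x+1)⁻¹)
          = ∫ x in (1:ℝ)..((h:ℝ)+2), x⁻¹ := by
        have := intervalIntegral.integral_comp_add_right (a := ((0:ℕ):ℝ)) (b := ((h+1:ℕ):ℝ))
          (fun x => x⁻¹) 1
        push_cast at this ⊢
        rw [this]; norm_num [add_assoc]
      rw [heq, integral_inv (by rw [Set.mem_uIcc]; push_neg; constructor <;> intro hx <;> linarith)]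
      rw [div_one]
    have hmono : AntitoneOn (fun x : ℝ => (x+1)⁻¹) (Set.Icc (((0:ℕ)):ℝ) (((h+1:ℕ)):ℝ)) := by
      intro x hx y hy hxy
      have hx1 : (0:ℝ) < x + 1 := by have := hx.1; push_cast at this; linarith
      exact inv_anti₀ hx1 (by linarith)
    have hsum0 := AntitoneOn.sum_le_integral_Ico (a := 0) (b := h+1)
      (f := fun x : ℝ => (x+1)⁻¹) (Nat.zero_le _) hmono
    rw [hint] at hsum0
    push_cast at hsum0
    have hsum0' : ∑ k ∈ Finset.range (h+1), ((k:ℝ)+1+1)⁻¹ ≤ Real.log ((h:ℝ)+2) := by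
      rw [Finset.range_eq_Ico]; exact hsum0
    have hterm : ∀ k : ℕ, ((k:ℝ)+1)^A ≤ 2 * (((k:ℝ)+1)+1)⁻¹ := by
      intro k
      have hk0 : (0:ℝ) ≤ (k:ℝ) := Nat.cast_nonneg k
      have h1 : ((k:ℝ)+1)^A ≤ ((k:ℝ)+1)^(-1:ℝ) :=
        Real.rpow_le_rpow_of_exponent_le (by linarith) hA
      rw [Real.rpow_neg_one] at h1
      refine h1.trans ?_
      rw [inv_eq_one_div, inv_eq_one_div, mul_one_div, div_le_div_iff₀ (by linarith) (by linarith)]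
      ring_nf; linarith
    have hbound : ∑ k ∈ Finset.range (h+1), ((k:ℝ)+1)^A ≤ 2 * Real.log ((h:ℝ)+2) := by
      calc ∑ k ∈ Finset.range (h+1), ((k:ℝ)+1)^A
          ≤ ∑ k ∈ Finset.range (h+1), 2 * (((k:ℝ)+1)+1)⁻¹ :=
            Finset.sum_le_sum fun k _ => hterm k
        _ = 2 * ∑ k ∈ Finset.range (h+1), ((k:ℝ)+1+1)⁻¹ := by
            rw [Finset.mul_sum]
        _ ≤ 2 * Real.log ((h:ℝ)+2) := by linarith [hsum0']
    have hone : (1:ℝ) ≤ ((h:ℝ)+1)^(max 0 (A+1)) :=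
      Real.one_le_rpow (by linarith) (le_max_left _ _)
    nlinarith [hbound, hone, hlogpos]
  rcases le_or_gt 0 A with hA0 | hA0
  · -- 0 ≤ A
    refine ⟨1 / Real.log 2, by positivity, fun h => ?_⟩
    have hmax : max 0 (A+1) = A+1 := max_eq_right (by linarith)
    have hh0 : (0:ℝ) ≤ (h:ℝ) := Nat.cast_nonneg h
    have hlogh : Real.log 2 ≤ Real.log ((h:ℝ)+2) :=
      Real.log_le_log two_pos (by linarith)
    have hsum : ∑ k ∈ Finset.range (h+1), ((k:ℝ)+1)^A ≤ ((h:ℝ)+1)^(A+1) := by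
      calc ∑ k ∈ Finset.range (h+1), ((k:ℝ)+1)^A
          ≤ ∑ _k ∈ Finset.range (h+1), ((h:ℝ)+1)^A := by
            refine Finset.sum_le_sum fun k hk => ?_
            have : (k:ℝ) ≤ (h:ℝ) := by
              exact_mod_cast Nat.le_of_lt_succ (Finset.mem_range.mp hk)
            exact Real.rpow_le_rpow (by positivity) (by linarith) hA0
        _ = ((h:ℝ)+1) * ((h:ℝ)+1)^A := by
            rw [Finset.sum_const, Finset.card_range]; push_cast; ring
        _ = ((h:ℝ)+1)^(A+1) := by
            rw [add_comm A 1, Real.rpow_add (by positivity), Real.rpow_one]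
    rw [hmax]
    have hp : (0:ℝ) < ((h:ℝ)+1)^(A+1) := Real.rpow_pos_of_pos (by positivity) _
    calc ∑ k ∈ Finset.range (h+1), ((k:ℝ)+1)^A ≤ ((h:ℝ)+1)^(A+1) := hsum
      _ = 1 / Real.log 2 * ((h:ℝ)+1)^(A+1) * Real.log 2 := by field_simp
      _ ≤ 1 / Real.log 2 * ((h:ℝ)+1)^(A+1) * Real.log ((h:ℝ)+2) :=
          mul_le_mul_of_nonneg_left hlogh (by positivity)
  · -- -1 < A < 0
    have h6 : (0:ℝ) < A + 1 := by linarith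
    refine ⟨2 / ((A+1) * Real.log 2), by positivity, fun h => ?_⟩
    have hmax : max 0 (A+1) = A+1 := max_eq_right (by linarith)
    have hh0 : (0:ℝ) ≤ (h:ℝ) := Nat.cast_nonneg h
    have hlogh : Real.log 2 ≤ Real.log ((h:ℝ)+2) :=
      Real.log_le_log two_pos (by linarith)
    have hint : ∫ x in ((0:ℕ):ℝ)..((h+1:ℕ):ℝ), (x+1)^A ≤ ((h:ℝ)+2)^(A+1) / (A+1) := by
      have heq : (∫ x in ((0:ℕ):ℝ)..((h+1:ℕ):ℝ), (x+1)^A)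
          = ∫ x in (1:ℝ)..((h:ℝ)+2), x^A := by
        have := intervalIntegral.integral_comp_add_right (a := ((0:ℕ):ℝ)) (b := ((h+1:ℕ):ℝ))
          (fun x => x^A) 1
        push_cast at this ⊢
        rw [this]; norm_num [add_assoc]
      rw [heq, integral_rpow (Or.inl (by linarith))]
      rw [Real.one_rpow]
      have h2 : (0:ℝ) < ((h:ℝ)+2)^(A+1) := Real.rpow_pos_of_pos (by positivity) _
      rw [div_le_div_iff_of_pos_right h6]
      linarith
    have hmono : AntitoneOn (fun x : ℝ => (x+1)^A) (Set.Icc (((0:ℕ)):ℝ) (((h+1:ℕ)):ℝ)) := by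
      intro x hx y hy hxy
      have hx1 : (0:ℝ) ≤ x := by have := hx.1; push_cast at this; linarith
      exact Real.rpow_le_rpow_of_nonpos (by linarith) (by linarith) (by linarith)
    have hsum0 := AntitoneOn.sum_le_integral_Ico (a := 0) (b := h+1)
      (f := fun x : ℝ => (x+1)^A) (Nat.zero_le _) hmono
    rw [show ((0:ℕ):ℝ) = 0 by norm_num] at hsum0
    push_cast at hsum0
    have hint' : ∫ x in (0:ℝ)..((h:ℝ)+1), (x+1)^A ≤ ((h:ℝ)+2)^(A+1) / (A+1) := by
      have : ((h+1:ℕ):ℝ) = (h:ℝ)+1 := by push_cast; ring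
      rw [show ((0:ℕ):ℝ) = 0 by norm_num, this] at hint
      exact hint
    have hsum0' : ∑ k ∈ Finset.range (h+1), ((k:ℝ)+1+1)^A ≤ ((h:ℝ)+2)^(A+1)/(A+1) := by
      rw [Finset.range_eq_Ico]
      exact hsum0.trans hint'
    have hstep : ∑ k ∈ Finset.range (h+1), ((k:ℝ)+1)^A
        ≤ (2:ℝ)^(-A) * (((h:ℝ)+2)^(A+1) / (A+1)) := by
      calc ∑ k ∈ Finset.range (h+1), ((k:ℝ)+1)^A
          ≤ ∑ k ∈ Finset.range (h+1), (2:ℝ)^(-A) * ((k:ℝ)+2)^A :=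
            Finset.sum_le_sum fun k _ => rpow_shift_le A (by linarith) k
        _ = (2:ℝ)^(-A) * ∑ k ∈ Finset.range (h+1), ((k:ℝ)+1+1)^A := by
            rw [Finset.mul_sum]
            exact Finset.sum_congr rfl fun k _ => by norm_num [add_assoc]
        _ ≤ (2:ℝ)^(-A) * (((h:ℝ)+2)^(A+1) / (A+1)) := by
            refine mul_le_mul_of_nonneg_left hsum0' (by positivity)
    have h2 : ((h:ℝ)+2)^(A+1) ≤ (2*((h:ℝ)+1))^(A+1) :=
      Real.rpow_le_rpow (by positivity) (by linarith) (by linarith)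
    have h3 : ((2:ℝ)*((h:ℝ)+1))^(A+1) = (2:ℝ)^(A+1) * ((h:ℝ)+1)^(A+1) :=
      Real.mul_rpow (by norm_num) (by positivity)
    have h4 : (2:ℝ)^(-A) * (2:ℝ)^(A+1) = 2 := by
      rw [← Real.rpow_add two_pos]; norm_num
    have h5 : (0:ℝ) < (2:ℝ)^(-A) := Real.rpow_pos_of_pos two_pos _
    have hp1 : (0:ℝ) < ((h:ℝ)+1)^(A+1) := Real.rpow_pos_of_pos (by positivity) _
    have key : (2:ℝ)^(-A) * ((h:ℝ)+2)^(A+1) ≤ 2 * ((h:ℝ)+1)^(A+1) := by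
      nlinarith [h2, h3, h4, h5]
    rw [hmax]
    calc ∑ k ∈ Finset.range (h+1), ((k:ℝ)+1)^A
        ≤ (2:ℝ)^(-A) * (((h:ℝ)+2)^(A+1) / (A+1)) := hstep
      _ = ((2:ℝ)^(-A) * ((h:ℝ)+2)^(A+1)) / (A+1) := by ring
      _ ≤ (2 * ((h:ℝ)+1)^(A+1)) / (A+1) :=
          (div_le_div_iff_of_pos_right h6).mpr key
      _ = (2 / ((A+1) * Real.log 2)) * ((h:ℝ)+1)^(A+1) * Real.log 2 := by
          field_simp
      _ ≤ (2 / ((A+1) * Real.log 2)) * ((h:ℝ)+1)^(A+1) * Real.log ((h:ℝ)+2) :=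
          mul_le_mul_of_nonneg_left hlogh (by positivity)

private lemma log_ratio_bound (δ : ℝ) (hδ : 0 < δ) (m k : ℕ) (hmk : m ≤ k) :
    Real.log ((k:ℝ)+2) ≤ (1 + 1/(δ * Real.log 2)) * Real.log ((m:ℝ)+2)
      * ((((k:ℝ)+1)/((m:ℝ)+1))^δ) := by
  have hlog2 : (0:ℝ) < Real.log 2 := Real.log_pos (by norm_num)
  have hm0 : (0:ℝ) ≤ (m:ℝ) := Nat.cast_nonneg m
  have hmk' : (m:ℝ) ≤ (k:ℝ) := Nat.cast_le.mpr hmk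
  set r : ℝ := ((k:ℝ)+1)/((m:ℝ)+1) with hr_def
  have hr : 1 ≤ r := (one_le_div (by linarith)).mpr (by linarith)
  have hrpos : 0 < r := by linarith
  have h1 : (k:ℝ)+2 ≤ ((m:ℝ)+2) * r := by
    rw [hr_def, ← mul_div_assoc, le_div_iff₀ (by linarith)]
    nlinarith
  have h2 : Real.log ((k:ℝ)+2) ≤ Real.log ((m:ℝ)+2) + Real.log r := by
    calc Real.log ((k:ℝ)+2) ≤ Real.log (((m:ℝ)+2) * r) :=
          Real.log_le_log (by linarith) h1
      _ = Real.log ((m:ℝ)+2) + Real.log r := Real.log_mul (by linarith) (by linarith)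
  have h3 : Real.log r ≤ r^δ / δ := Real.log_le_rpow_div hrpos.le hδ
  have h4 : Real.log 2 ≤ Real.log ((m:ℝ)+2) := Real.log_le_log two_pos (by linarith)
  have h5 : (1:ℝ) ≤ r^δ := Real.one_le_rpow hr hδ.le
  have hlm : (0:ℝ) < Real.log ((m:ℝ)+2) := lt_of_lt_of_le hlog2 h4
  have fact1 : Real.log ((m:ℝ)+2) ≤ Real.log ((m:ℝ)+2) * r^δ := by nlinarith
  have fact2 : r^δ / δ ≤ 1/(δ * Real.log 2) * Real.log ((m:ℝ)+2) * r^δ := by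
    have h6 : (0:ℝ) < r^δ / δ := by positivity
    calc r^δ/δ = (r^δ/δ) * Real.log 2 * (1/Real.log 2) := by field_simp
      _ ≤ (r^δ/δ) * Real.log ((m:ℝ)+2) * (1/Real.log 2) := by
          have : (r^δ/δ) * Real.log 2 ≤ (r^δ/δ) * Real.log ((m:ℝ)+2) :=
            mul_le_mul_of_nonneg_left h4 h6.le
          exact mul_le_mul_of_nonneg_right this (by positivity)
      _ = 1/(δ * Real.log 2) * Real.log ((m:ℝ)+2) * r^δ := by field_simp
  calc Real.log ((k:ℝ)+2) ≤ Real.log ((m:ℝ)+2) + r^δ/δ := by linarith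
    _ ≤ Real.log ((m:ℝ)+2) * r^δ + 1/(δ*Real.log 2) * Real.log ((m:ℝ)+2) * r^δ := by linarith
    _ = (1 + 1/(δ * Real.log 2)) * Real.log ((m:ℝ)+2) * r^δ := by ring

private lemma tail_sum_bound (s : ℝ) (hs : s < -1) (C : ℕ) : ∃ c : ℝ, 0 < c ∧ ∀ m N : ℕ,
    ∑ k ∈ Finset.Ico m N, ((k:ℝ)+1)^s * Real.log ((k:ℝ)+2)^C
      ≤ c * ((m:ℝ)+1)^(s+1) * Real.log ((m:ℝ)+2)^C := by
  have hlog2 : (0:ℝ) < Real.log 2 := Real.log_pos (by norm_num)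
  set δ : ℝ := (-1-s)/(2*((C:ℝ)+1)) with hδ_def
  have hδ : 0 < δ := by
    apply div_pos (by linarith)
    positivity
  set t : ℝ := s + (C:ℝ)*δ with ht_def
  have hCd : (C:ℝ)*δ ≤ -1-s := by
    rw [hδ_def]
    rw [mul_div_assoc']
    rw [div_le_iff₀ (by positivity)]
    have hC0 : (0:ℝ) ≤ (C:ℝ) := Nat.cast_nonneg C
    nlinarith
  have ht : t < -1 := by
    have : (C:ℝ)*δ < -1-s := by
      rw [hδ_def, mul_div_assoc']
      rw [div_lt_iff₀ (by positivity)]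
      have hC0 : (0:ℝ) ≤ (C:ℝ) := Nat.cast_nonneg C
      nlinarith
    rw [ht_def]; linarith
  set c₁ : ℝ := 1 + 1/(δ * Real.log 2) with hc₁_def
  have hc₁ : 0 < c₁ := by positivity
  set cP : ℝ := (2:ℝ)^(-t) / (-(t+1)) with hcP_def
  have hcP : 0 < cP := by
    apply div_pos (Real.rpow_pos_of_pos two_pos _); linarith
  refine ⟨c₁^C * cP, by positivity, fun m N => ?_⟩
  have hm0 : (0:ℝ) ≤ (m:ℝ) := Nat.cast_nonneg m
  have hlm : (0:ℝ) < Real.log ((m:ℝ)+2) := Real.log_pos (by linarith)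
  set K : ℝ := c₁^C * Real.log ((m:ℝ)+2)^C * ((m:ℝ)+1)^(-(δ*(C:ℝ))) with hK_def
  have hK : 0 ≤ K := by positivity
  have hterm : ∀ k ∈ Finset.Ico m N, ((k:ℝ)+1)^s * Real.log ((k:ℝ)+2)^C ≤ K * ((k:ℝ)+1)^t := by
    intro k hk
    have hmk : m ≤ k := (Finset.mem_Ico.mp hk).1
    have hmk' : (m:ℝ) ≤ (k:ℝ) := Nat.cast_le.mpr hmk
    have hk0 : (0:ℝ) ≤ (k:ℝ) := Nat.cast_nonneg k
    have hrb := log_ratio_bound δ hδ m k hmk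
    have hlk : (0:ℝ) ≤ Real.log ((k:ℝ)+2) := Real.log_nonneg (by linarith)
    set r : ℝ := ((k:ℝ)+1)/((m:ℝ)+1) with hr_def
    have hr0 : 0 ≤ r := by positivity
    have hpow : Real.log ((k:ℝ)+2)^C ≤ (c₁ * Real.log ((m:ℝ)+2) * r^δ)^C :=
      pow_le_pow_left₀ hlk hrb C
    have hrC : (r^δ)^C = ((k:ℝ)+1)^(δ*(C:ℝ)) * ((m:ℝ)+1)^(-(δ*(C:ℝ))) := by
      rw [← Real.rpow_natCast (r^δ) C, ← Real.rpow_mul hr0, hr_def,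
        Real.div_rpow (by positivity) (by positivity), Real.rpow_neg (by positivity),
        div_eq_mul_inv]
    have hcomb : ((k:ℝ)+1)^s * ((k:ℝ)+1)^(δ*(C:ℝ)) = ((k:ℝ)+1)^t := by
      rw [← Real.rpow_add (by positivity), ht_def]; ring_nf
    calc ((k:ℝ)+1)^s * Real.log ((k:ℝ)+2)^C
        ≤ ((k:ℝ)+1)^s * (c₁ * Real.log ((m:ℝ)+2) * r^δ)^C := by
          exact mul_le_mul_of_nonneg_left hpow (by positivity)
      _ = (c₁^C * Real.log ((m:ℝ)+2)^C) * (((k:ℝ)+1)^s * (r^δ)^C) := by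
          rw [mul_pow, mul_pow]; ring
      _ = K * ((k:ℝ)+1)^t := by
          rw [hrC, hK_def, ← hcomb]; ring
  have hsum : ∑ k ∈ Finset.Ico m N, ((k:ℝ)+1)^s * Real.log ((k:ℝ)+2)^C
      ≤ K * (cP * ((m:ℝ)+1)^(t+1)) := by
    calc ∑ k ∈ Finset.Ico m N, ((k:ℝ)+1)^s * Real.log ((k:ℝ)+2)^C
        ≤ ∑ k ∈ Finset.Ico m N, K * ((k:ℝ)+1)^t := Finset.sum_le_sum hterm
      _ = K * ∑ k ∈ Finset.Ico m N, ((k:ℝ)+1)^t := by rw [Finset.mul_sum]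
      _ ≤ K * (cP * ((m:ℝ)+1)^(t+1)) := by
          refine mul_le_mul_of_nonneg_left ?_ hK
          have := sum_rpow_tail t ht m N
          rw [hcP_def]; exact this
  refine hsum.trans (le_of_eq ?_)
  rw [hK_def]
  have hmm : ((m:ℝ)+1)^(-(δ*(C:ℝ))) * ((m:ℝ)+1)^(t+1) = ((m:ℝ)+1)^(s+1) := by
    rw [← Real.rpow_add (by positivity), ht_def]; ring_nf
  calc c₁^C * Real.log ((m:ℝ)+2)^C * ((m:ℝ)+1)^(-(δ*(C:ℝ))) * (cP * ((m:ℝ)+1)^(t+1))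
      = (c₁^C * cP) * (((m:ℝ)+1)^(-(δ*(C:ℝ))) * ((m:ℝ)+1)^(t+1)) * Real.log ((m:ℝ)+2)^C := by
        ring
    _ = (c₁^C * cP) * ((m:ℝ)+1)^(s+1) * Real.log ((m:ℝ)+2)^C := by rw [hmm]

private lemma rpow_base_between {x y : ℝ} (hx : 1 ≤ x) (h1 : x ≤ y) (h2 : y ≤ 2*x) (B : ℝ) :
    y ^ B ≤ (2:ℝ)^|B| * x^B := by
  rcases le_or_gt 0 B with hB | hB
  · rw [abs_of_nonneg hB]
    calc y^B ≤ (2*x)^B := Real.rpow_le_rpow (by linarith) h2 hB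
      _ = (2:ℝ)^B * x^B := Real.mul_rpow (by norm_num) (by linarith)
  · rw [abs_of_neg hB]
    have hyx : y^B ≤ x^B := Real.rpow_le_rpow_of_nonpos (by linarith) h1 hB.le
    have h2B : (1:ℝ) ≤ (2:ℝ)^(-B) := Real.one_le_rpow one_le_two (by linarith)
    have hxp : (0:ℝ) < x^B := Real.rpow_pos_of_pos (by linarith) B
    nlinarith

private lemma rpow_base_prod {x y z : ℝ} (hx : 1 ≤ x) (hz : 1 ≤ z) (hzy : z ≤ y)
    (hyxz : y ≤ x*z) (B : ℝ) : y ^ B ≤ x^|B| * z^B := by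
  rcases le_or_gt 0 B with hB | hB
  · rw [abs_of_nonneg hB]
    calc y^B ≤ (x*z)^B := Real.rpow_le_rpow (by linarith) hyxz hB
      _ = x^B * z^B := Real.mul_rpow (by linarith) (by linarith)
  · rw [abs_of_neg hB]
    have hyz : y^B ≤ z^B := Real.rpow_le_rpow_of_nonpos (by linarith) hzy hB.le
    have hxB : (1:ℝ) ≤ x^(-B) := Real.one_le_rpow hx (by linarith)
    have hzp : (0:ℝ) < z^B := Real.rpow_pos_of_pos (by linarith) B
    nlinarith

/-- a summation estimate. -/
theorem sum_power_log_bound (A B : ℝ) (hAB : A + B + 1 < 0) (C : ℕ) :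
    ∃ D₂ : ℝ, 0 < D₂ ∧ ∀ h : ℕ,
      (Summable fun k : ℕ =>
        ((k : ℝ) + 1) ^ A * ((h : ℝ) + k + 1) ^ B * (Real.log ((h : ℝ) + k + 2)) ^ C) ∧
      (∑' k : ℕ, ((k : ℝ) + 1) ^ A * ((h : ℝ) + k + 1) ^ B * (Real.log ((h : ℝ) + k + 2)) ^ C)
        ≤ D₂ * ((h : ℝ) + 1) ^ (max B (A + B + 1)) * (Real.log ((h : ℝ) + 2)) ^ (C + 1) := by
  have hlog2 : (0:ℝ) < Real.log 2 := Real.log_pos (by norm_num)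
  have hsAB : A + B < -1 := by linarith
  obtain ⟨cH, hcH, hH⟩ := head_sum_bound A
  obtain ⟨cT, hcT, hT⟩ := tail_sum_bound (A+B) hsAB C
  have h2B : (0:ℝ) < (2:ℝ)^|B| := Real.rpow_pos_of_pos two_pos _
  set K1 : ℝ := (2:ℝ)^|B| * 2^C * cH with hK1_def
  set K2 : ℝ := (2:ℝ)^|B| * 2^C * cT * 2^C / Real.log 2 with hK2_def
  have hK1 : 0 < K1 := by positivity
  have hK2 : 0 < K2 := by positivity
  refine ⟨K1 + K2, by positivity, fun h => ?_⟩
  set f : ℕ → ℝ := fun k =>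
    ((k : ℝ) + 1) ^ A * ((h : ℝ) + k + 1) ^ B * (Real.log ((h : ℝ) + k + 2)) ^ C with hf_def
  have hh0 : (0:ℝ) ≤ (h:ℝ) := Nat.cast_nonneg h
  have hfnn : ∀ k, 0 ≤ f k := by
    intro k
    have hk0 : (0:ℝ) ≤ (k:ℝ) := Nat.cast_nonneg k
    have : (0:ℝ) ≤ Real.log ((h:ℝ)+(k:ℝ)+2) := Real.log_nonneg (by linarith)
    positivity
  have hmax_eq : max B (A+B+1) = B + max 0 (A+1) := by
    rw [← max_add_add_left B 0 (A+1), add_zero]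
    congr 1; ring
  have honeB : (1:ℝ) ≤ ((h:ℝ)+1)^(max 0 (A+1)) :=
    Real.one_le_rpow (by linarith) (le_max_left _ _)
  have hlh : (0:ℝ) < Real.log ((h:ℝ)+2) := Real.log_pos (by linarith)
  have hlogh2 : Real.log 2 ≤ Real.log ((h:ℝ)+2) := Real.log_le_log two_pos (by linarith)
  set X : ℝ := ((h:ℝ)+1)^(max B (A+B+1)) * Real.log ((h:ℝ)+2)^(C+1) with hX_def
  -- head estimate
  have head_est : ∑ k ∈ Finset.range (h+1), f k ≤ K1 * X := by
    have hterm : ∀ k ∈ Finset.range (h+1), f k ≤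
        ((2:ℝ)^|B| * ((h:ℝ)+1)^B * (2^C * Real.log ((h:ℝ)+2)^C)) * ((k:ℝ)+1)^A := by
      intro k hk
      have hkh : k ≤ h := Nat.le_of_lt_succ (Finset.mem_range.mp hk)
      have hkh' : (k:ℝ) ≤ (h:ℝ) := Nat.cast_le.mpr hkh
      have hk0 : (0:ℝ) ≤ (k:ℝ) := Nat.cast_nonneg k
      have hb : ((h:ℝ)+(k:ℝ)+1)^B ≤ (2:ℝ)^|B| * ((h:ℝ)+1)^B :=
        rpow_base_between (by linarith) (by linarith) (by linarith) B
      have hlog : Real.log ((h:ℝ)+(k:ℝ)+2) ≤ 2 * Real.log ((h:ℝ)+2) := by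
        have h1 : Real.log ((h:ℝ)+(k:ℝ)+2) ≤ Real.log (((h:ℝ)+2)^2) :=
          Real.log_le_log (by linarith) (by nlinarith)
        rwa [Real.log_pow, Nat.cast_ofNat] at h1
      have hc : Real.log ((h:ℝ)+(k:ℝ)+2)^C ≤ 2^C * Real.log ((h:ℝ)+2)^C := by
        rw [← mul_pow]
        exact pow_le_pow_left₀ (Real.log_nonneg (by linarith)) hlog C
      have ha : (0:ℝ) ≤ ((k:ℝ)+1)^A := (Real.rpow_pos_of_pos (by linarith) A).le
      calc f k = ((k:ℝ)+1)^A * (((h:ℝ)+(k:ℝ)+1)^B * Real.log ((h:ℝ)+(k:ℝ)+2)^C) := by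
            rw [hf_def]; ring
        _ ≤ ((k:ℝ)+1)^A * (((2:ℝ)^|B| * ((h:ℝ)+1)^B) * (2^C * Real.log ((h:ℝ)+2)^C)) := by
            refine mul_le_mul_of_nonneg_left ?_ ha
            refine mul_le_mul hb hc ?_ ?_
            · exact pow_nonneg (Real.log_nonneg (by linarith)) C
            · positivity
        _ = ((2:ℝ)^|B| * ((h:ℝ)+1)^B * (2^C * Real.log ((h:ℝ)+2)^C)) * ((k:ℝ)+1)^A := by ring
    calc ∑ k ∈ Finset.range (h+1), f k
        ≤ ∑ k ∈ Finset.range (h+1),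
            ((2:ℝ)^|B| * ((h:ℝ)+1)^B * (2^C * Real.log ((h:ℝ)+2)^C)) * ((k:ℝ)+1)^A :=
          Finset.sum_le_sum hterm
      _ = ((2:ℝ)^|B| * ((h:ℝ)+1)^B * (2^C * Real.log ((h:ℝ)+2)^C)) *
            ∑ k ∈ Finset.range (h+1), ((k:ℝ)+1)^A := by rw [Finset.mul_sum]
      _ ≤ ((2:ℝ)^|B| * ((h:ℝ)+1)^B * (2^C * Real.log ((h:ℝ)+2)^C)) *
            (cH * ((h:ℝ)+1)^(max 0 (A+1)) * Real.log ((h:ℝ)+2)) := by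
          refine mul_le_mul_of_nonneg_left (hH h) ?_
          positivity
      _ = K1 * X := by
          rw [hK1_def, hX_def, hmax_eq, Real.rpow_add (by positivity : (0:ℝ) < (h:ℝ)+1), pow_succ]
          ring
  -- tail estimate
  have tail_est : ∀ M : ℕ, ∑ k ∈ Finset.Ico (h+1) M, f k ≤ K2 * X := by
    intro M
    have hterm : ∀ k ∈ Finset.Ico (h+1) M, f k ≤
        ((2:ℝ)^|B| * 2^C) * (((k:ℝ)+1)^(A+B) * Real.log ((k:ℝ)+2)^C) := by
      intro k hk
      have hkh : h + 1 ≤ k := (Finset.mem_Ico.mp hk).1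
      have hkh' : (h:ℝ) + 1 ≤ (k:ℝ) := by exact_mod_cast Nat.cast_le.mpr hkh
      have hk0 : (0:ℝ) ≤ (k:ℝ) := Nat.cast_nonneg k
      have hb : ((h:ℝ)+(k:ℝ)+1)^B ≤ (2:ℝ)^|B| * ((k:ℝ)+1)^B :=
        rpow_base_between (by linarith) (by linarith) (by linarith) B
      have hlog : Real.log ((h:ℝ)+(k:ℝ)+2) ≤ 2 * Real.log ((k:ℝ)+2) := by
        have h1 : Real.log ((h:ℝ)+(k:ℝ)+2) ≤ Real.log (((k:ℝ)+2)^2) :=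
          Real.log_le_log (by linarith) (by nlinarith)
        rwa [Real.log_pow, Nat.cast_ofNat] at h1
      have hc : Real.log ((h:ℝ)+(k:ℝ)+2)^C ≤ 2^C * Real.log ((k:ℝ)+2)^C := by
        rw [← mul_pow]
        exact pow_le_pow_left₀ (Real.log_nonneg (by linarith)) hlog C
      have ha : (0:ℝ) ≤ ((k:ℝ)+1)^A := (Real.rpow_pos_of_pos (by linarith) A).le
      have hab : ((k:ℝ)+1)^A * ((k:ℝ)+1)^B = ((k:ℝ)+1)^(A+B) :=
        (Real.rpow_add (by linarith) A B).symm
      calc f k = ((k:ℝ)+1)^A * (((h:ℝ)+(k:ℝ)+1)^B * Real.log ((h:ℝ)+(k:ℝ)+2)^C) := by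
            rw [hf_def]; ring
        _ ≤ ((k:ℝ)+1)^A * (((2:ℝ)^|B| * ((k:ℝ)+1)^B) * (2^C * Real.log ((k:ℝ)+2)^C)) := by
            refine mul_le_mul_of_nonneg_left ?_ ha
            refine mul_le_mul hb hc ?_ ?_
            · exact pow_nonneg (Real.log_nonneg (by linarith)) C
            · positivity
        _ = ((2:ℝ)^|B| * 2^C) * ((((k:ℝ)+1)^A * ((k:ℝ)+1)^B) * Real.log ((k:ℝ)+2)^C) := by ring
        _ = ((2:ℝ)^|B| * 2^C) * (((k:ℝ)+1)^(A+B) * Real.log ((k:ℝ)+2)^C) := by rw [hab]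
    have hT' := hT (h+1) M
    have hcast1 : (((h+1:ℕ)):ℝ) + 1 = (h:ℝ)+2 := by push_cast; ring
    have hcast2 : (((h+1:ℕ)):ℝ) + 2 = (h:ℝ)+3 := by push_cast; ring
    rw [hcast1, hcast2] at hT'
    have step2 : cT * ((h:ℝ)+2)^(A+B+1) * Real.log ((h:ℝ)+3)^C
        ≤ cT * ((h:ℝ)+1)^(A+B+1) * (2^C * Real.log ((h:ℝ)+2)^C) := by
      have hb1 : ((h:ℝ)+2)^(A+B+1) ≤ ((h:ℝ)+1)^(A+B+1) :=
        Real.rpow_le_rpow_of_nonpos (by linarith) (by linarith) (by linarith)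
      have hb2 : Real.log ((h:ℝ)+3)^C ≤ 2^C * Real.log ((h:ℝ)+2)^C := by
        rw [← mul_pow]
        refine pow_le_pow_left₀ (Real.log_nonneg (by linarith)) ?_ C
        have h1 : Real.log ((h:ℝ)+3) ≤ Real.log (((h:ℝ)+2)^2) :=
          Real.log_le_log (by linarith) (by nlinarith)
        rwa [Real.log_pow, Nat.cast_ofNat] at h1
      have hp1 : (0:ℝ) < ((h:ℝ)+2)^(A+B+1) := Real.rpow_pos_of_pos (by linarith) _
      have hp2 : (0:ℝ) < ((h:ℝ)+1)^(A+B+1) := Real.rpow_pos_of_pos (by linarith) _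
      have hl3 : (0:ℝ) ≤ Real.log ((h:ℝ)+3)^C := pow_nonneg (Real.log_nonneg (by linarith)) C
      calc cT * ((h:ℝ)+2)^(A+B+1) * Real.log ((h:ℝ)+3)^C
          ≤ cT * ((h:ℝ)+1)^(A+B+1) * Real.log ((h:ℝ)+3)^C := by
            refine mul_le_mul_of_nonneg_right ?_ hl3
            exact mul_le_mul_of_nonneg_left hb1 hcT.le
        _ ≤ cT * ((h:ℝ)+1)^(A+B+1) * (2^C * Real.log ((h:ℝ)+2)^C) := by
            refine mul_le_mul_of_nonneg_left hb2 (by positivity)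
    have step3 : cT * ((h:ℝ)+1)^(A+B+1) * (2^C * Real.log ((h:ℝ)+2)^C)
        ≤ cT * ((h:ℝ)+1)^(max B (A+B+1)) * (2^C * (Real.log ((h:ℝ)+2)^(C+1) / Real.log 2)) := by
      have hb1 : ((h:ℝ)+1)^(A+B+1) ≤ ((h:ℝ)+1)^(max B (A+B+1)) :=
        Real.rpow_le_rpow_of_exponent_le (by linarith) (le_max_right _ _)
      have hb2 : Real.log ((h:ℝ)+2)^C ≤ Real.log ((h:ℝ)+2)^(C+1) / Real.log 2 := by
        rw [le_div_iff₀ hlog2, pow_succ]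
        exact mul_le_mul_of_nonneg_left hlogh2 (pow_nonneg hlh.le C)
      have hp : (0:ℝ) < ((h:ℝ)+1)^(max B (A+B+1)) := Real.rpow_pos_of_pos (by linarith) _
      calc cT * ((h:ℝ)+1)^(A+B+1) * (2^C * Real.log ((h:ℝ)+2)^C)
          ≤ cT * ((h:ℝ)+1)^(max B (A+B+1)) * (2^C * Real.log ((h:ℝ)+2)^C) := by
            refine mul_le_mul_of_nonneg_right ?_ (by positivity)
            exact mul_le_mul_of_nonneg_left hb1 hcT.le
        _ ≤ cT * ((h:ℝ)+1)^(max B (A+B+1)) * (2^C * (Real.log ((h:ℝ)+2)^(C+1) / Real.log 2)) := by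
            refine mul_le_mul_of_nonneg_left ?_ (by positivity)
            exact mul_le_mul_of_nonneg_left hb2 (by positivity)
    calc ∑ k ∈ Finset.Ico (h+1) M, f k
        ≤ ∑ k ∈ Finset.Ico (h+1) M,
            ((2:ℝ)^|B| * 2^C) * (((k:ℝ)+1)^(A+B) * Real.log ((k:ℝ)+2)^C) :=
          Finset.sum_le_sum hterm
      _ = ((2:ℝ)^|B| * 2^C) *
            ∑ k ∈ Finset.Ico (h+1) M, ((k:ℝ)+1)^(A+B) * Real.log ((k:ℝ)+2)^C := by
          rw [Finset.mul_sum]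
      _ ≤ ((2:ℝ)^|B| * 2^C) * (cT * ((h:ℝ)+1)^(max B (A+B+1)) *
            (2^C * (Real.log ((h:ℝ)+2)^(C+1) / Real.log 2))) := by
          refine mul_le_mul_of_nonneg_left (hT'.trans (step2.trans step3)) (by positivity)
      _ = K2 * X := by
          rw [hK2_def, hX_def]; field_simp
  -- summability
  have hsummable : Summable f := by
    set δ : ℝ := (-1-(A+B))/((C:ℝ)+1) with hδ_def
    have hδ : 0 < δ := div_pos (by linarith) (by positivity)
    set q : ℝ := A + B + δ*(C:ℝ) with hq_def
    have hq : q < -1 := by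
      have h1 : δ*(C:ℝ) < δ*((C:ℝ)+1) := by
        refine mul_lt_mul_of_pos_left ?_ hδ; linarith
      have h2 : δ*((C:ℝ)+1) = -1-(A+B) := by
        rw [hδ_def]; field_simp
      rw [hq_def]; linarith
    set Kh : ℝ := ((h:ℝ)+1)^|B| * (((h:ℝ)+2)^δ / δ)^C with hKh_def
    have hbase : Summable (fun k : ℕ => ((k:ℝ)+1)^q) := by
      have h1 : Summable (fun k : ℕ => ((k:ℕ):ℝ)^q) := Real.summable_nat_rpow.mpr hq
      have h2 := (_root_.summable_nat_add_iff (f := fun k : ℕ => ((k:ℕ):ℝ)^q) 1).mpr h1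
      refine h2.congr fun k => ?_
      push_cast; ring_nf
    refine Summable.of_nonneg_of_le hfnn (fun k => ?_) (hbase.mul_left Kh)
    have hk0 : (0:ℝ) ≤ (k:ℝ) := Nat.cast_nonneg k
    have hb : ((h:ℝ)+(k:ℝ)+1)^B ≤ ((h:ℝ)+1)^|B| * ((k:ℝ)+1)^B :=
      rpow_base_prod (by linarith) (by linarith) (by linarith) (by nlinarith) B
    have hlog : Real.log ((h:ℝ)+(k:ℝ)+2) ≤ ((h:ℝ)+2)^δ / δ * ((k:ℝ)+1)^δ := by
      have h1 : Real.log ((h:ℝ)+(k:ℝ)+2) ≤ ((h:ℝ)+(k:ℝ)+2)^δ / δ :=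
        Real.log_le_rpow_div (by linarith) hδ
      have h2 : ((h:ℝ)+(k:ℝ)+2)^δ ≤ (((h:ℝ)+2)*((k:ℝ)+1))^δ :=
        Real.rpow_le_rpow (by linarith) (by nlinarith) hδ.le
      have h3 : (((h:ℝ)+2)*((k:ℝ)+1))^δ = ((h:ℝ)+2)^δ * ((k:ℝ)+1)^δ :=
        Real.mul_rpow (by linarith) (by linarith)
      calc Real.log ((h:ℝ)+(k:ℝ)+2) ≤ ((h:ℝ)+(k:ℝ)+2)^δ / δ := h1
        _ ≤ (((h:ℝ)+2)^δ * ((k:ℝ)+1)^δ) / δ := by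
            rw [← h3]; exact (div_le_div_iff_of_pos_right hδ).mpr h2
        _ = ((h:ℝ)+2)^δ / δ * ((k:ℝ)+1)^δ := by ring
    have hlogC : Real.log ((h:ℝ)+(k:ℝ)+2)^C ≤ (((h:ℝ)+2)^δ / δ)^C * (((k:ℝ)+1)^δ)^C := by
      rw [← mul_pow]
      exact pow_le_pow_left₀ (Real.log_nonneg (by linarith)) hlog C
    have hdC : (((k:ℝ)+1)^δ)^C = ((k:ℝ)+1)^(δ*(C:ℝ)) := by
      rw [← Real.rpow_natCast (((k:ℝ)+1)^δ) C, ← Real.rpow_mul (by linarith)]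
    have hcomb : ((k:ℝ)+1)^A * ((k:ℝ)+1)^B * ((k:ℝ)+1)^(δ*(C:ℝ)) = ((k:ℝ)+1)^q := by
      rw [← Real.rpow_add (by linarith), ← Real.rpow_add (by linarith), hq_def]
    have ha : (0:ℝ) ≤ ((k:ℝ)+1)^A := (Real.rpow_pos_of_pos (by linarith) A).le
    calc f k = ((k:ℝ)+1)^A * ((h:ℝ)+(k:ℝ)+1)^B * Real.log ((h:ℝ)+(k:ℝ)+2)^C := by
          rw [hf_def]
      _ ≤ ((k:ℝ)+1)^A * (((h:ℝ)+1)^|B| * ((k:ℝ)+1)^B)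
            * ((((h:ℝ)+2)^δ / δ)^C * (((k:ℝ)+1)^δ)^C) := by
          refine mul_le_mul ?_ hlogC (pow_nonneg (Real.log_nonneg (by linarith)) C) ?_
          · exact mul_le_mul_of_nonneg_left hb ha
          · positivity
      _ = Kh * (((k:ℝ)+1)^A * ((k:ℝ)+1)^B * ((k:ℝ)+1)^(δ*(C:ℝ))) := by
          rw [hKh_def, hdC]; ring
      _ = Kh * ((k:ℝ)+1)^q := by rw [hcomb]
  refine ⟨hsummable, ?_⟩
  have key : ∀ N : ℕ, ∑ k ∈ Finset.range N, f k ≤ (K1 + K2) * X := by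
    intro N
    have hsub : Finset.range N ⊆ Finset.range (max N (h+1)) :=
      Finset.range_subset_range.mpr (le_max_left _ _)
    have h1 : ∑ k ∈ Finset.range N, f k ≤ ∑ k ∈ Finset.range (max N (h+1)), f k :=
      Finset.sum_le_sum_of_subset_of_nonneg hsub (fun k _ _ => hfnn k)
    have h2 : ∑ k ∈ Finset.range (max N (h+1)), f k
        = ∑ k ∈ Finset.range (h+1), f k + ∑ k ∈ Finset.Ico (h+1) (max N (h+1)), f k := by
      simp only [Finset.range_eq_Ico]
      exact (Finset.sum_Ico_consecutive f (Nat.zero_le _) (le_max_right _ _)).symm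
    calc ∑ k ∈ Finset.range N, f k ≤ ∑ k ∈ Finset.range (max N (h+1)), f k := h1
      _ = ∑ k ∈ Finset.range (h+1), f k + ∑ k ∈ Finset.Ico (h+1) (max N (h+1)), f k := h2
      _ ≤ K1 * X + K2 * X := add_le_add head_est (tail_est _)
      _ = (K1 + K2) * X := by ring
  have := Real.tsum_le_of_sum_range_le hfnn key
  calc ∑' k, f k ≤ (K1+K2) * X := this
    _ = (K1+K2) * ((h:ℝ)+1)^(max B (A+B+1)) * Real.log ((h:ℝ)+2)^(C+1) := by
        rw [hX_def]; ring

end SumPowerLogBound
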